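/- arXiv:1602.03986 — 4 statements merged into one kernel-verified Lean document; each statement's English description precedes it below -/
import Mathlib

section
/- The set of sums of squares of degree-d forms in n variables is a closed convex cone with nonempty interior in the vector space of degree-2d forms. -/
open MvPolynomial Finsupp

/-- `f` is a sum of squares of forms of degree `d` in `n` variables. -/
def IsSOSForm (n d : ℕ) (f : MvPolynomial (Fin n) ℝ) : Prop :=
  ∃ (N : ℕ) (g : Fin N → MvPolynomial (Fin n) ℝ),
    (∀ i, (g i).IsHomogeneous d) ∧ f = ∑ i, (g i) ^ 2

/-- The cone `Σ_{2d}` of sums of squares of degree-`d` forms, as a subset of the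
finite-dimensional real vector space `R[x]_{2d}` of forms of degree `2d`. -/
def SigmaCone (n d : ℕ) : Set (homogeneousSubmodule (Fin n) ℝ (2 * d)) :=
  {f | IsSOSForm n d (f : MvPolynomial (Fin n) ℝ)}

/-- The canonical topology on the finite-dimensional real vector space of forms. -/
noncomputable instance (n d : ℕ) : TopologicalSpace (homogeneousSubmodule (Fin n) ℝ d) :=
  moduleTopology ℝ _

/-- A form is positive definite if it is positive away from the origin. -/
def PosDefForm (n : ℕ) (f : MvPolynomial (Fin n) ℝ) : Prop :=
  ∀ x : Fin n → ℝ, x ≠ 0 → 0 < eval x f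

/-- For a sos form `f` of degree `2d`, the set `U_f` of forms `p` of degree `d`
such that `f - c p ^ 2` is sos for some `c > 0`. -/
def Uset (n d : ℕ) (f : MvPolynomial (Fin n) ℝ) : Set (MvPolynomial (Fin n) ℝ) :=
  {p | p.IsHomogeneous d ∧ ∃ c : ℝ, 0 < c ∧ IsSOSForm n d (f - c • p ^ 2)}


-- ===== auxiliary material =====
open Matrix
-- infra
set_option synthInstance.maxHeartbeats 1000000
set_option maxHeartbeats 1000000
instance (n k : ℕ) : IsModuleTopology ℝ (homogeneousSubmodule (Fin n) ℝ k) := ⟨rfl⟩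

instance (n k : ℕ) : FiniteDimensional ℝ (homogeneousSubmodule (Fin n) ℝ k) :=
  Submodule.finiteDimensional_of_le
    (show homogeneousSubmodule (Fin n) ℝ k ≤ restrictTotalDegree (Fin n) ℝ k from
      fun p hp => (mem_restrictTotalDegree _ _ _).2
        (MvPolynomial.IsHomogeneous.totalDegree_le hp))

instance (n k : ℕ) : ContinuousAdd (homogeneousSubmodule (Fin n) ℝ k) :=
  IsModuleTopology.toContinuousAdd ℝ _

instance (n k : ℕ) : IsTopologicalAddGroup (homogeneousSubmodule (Fin n) ℝ k) where
  continuous_neg := IsModuleTopology.continuous_neg ℝ _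

noncomputable def hsEquiv (n k : ℕ) :
    homogeneousSubmodule (Fin n) ℝ k ≃L[ℝ]
      (Fin (Module.finrank ℝ (homogeneousSubmodule (Fin n) ℝ k)) → ℝ) :=
  { (Module.finBasis ℝ (homogeneousSubmodule (Fin n) ℝ k)).equivFun with
    continuous_toFun := IsModuleTopology.continuous_of_linearMap
      (Module.finBasis ℝ (homogeneousSubmodule (Fin n) ℝ k)).equivFun.toLinearMap
    continuous_invFun := LinearMap.continuous_of_finiteDimensional
      (Module.finBasis ℝ (homogeneousSubmodule (Fin n) ℝ k)).equivFun.symm.toLinearMap }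

instance (n k : ℕ) : T2Space (homogeneousSubmodule (Fin n) ℝ k) :=
  (hsEquiv n k).toHomeomorph.isEmbedding.t2Space

variable {n d : ℕ}

lemma isSOSForm_zero : IsSOSForm n d 0 :=
  ⟨0, Fin.elim0, fun i => i.elim0, by simp⟩

lemma IsSOSForm.isHomogeneous {f : MvPolynomial (Fin n) ℝ} (hf : IsSOSForm n d f) :
    f.IsHomogeneous (2 * d) := by
  obtain ⟨N, g, hg, rfl⟩ := hf
  rw [two_mul, ← Nat.mul_two d]
  exact MvPolynomial.IsHomogeneous.sum _ _ _ fun i _ => (hg i).pow 2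

lemma IsSOSForm.add {f g : MvPolynomial (Fin n) ℝ} (hf : IsSOSForm n d f)
    (hg : IsSOSForm n d g) : IsSOSForm n d (f + g) := by
  obtain ⟨N, u, hu, rfl⟩ := hf
  obtain ⟨M, v, hv, rfl⟩ := hg
  refine ⟨N + M, Fin.append u v, fun i => ?_, ?_⟩
  · induction i using Fin.addCases with
    | left i => simpa using hu i
    | right i => simpa using hv i
  · rw [Fin.sum_univ_add]
    simp

lemma IsSOSForm.smul {f : MvPolynomial (Fin n) ℝ} {c : ℝ} (hc : 0 ≤ c)
    (hf : IsSOSForm n d f) : IsSOSForm n d (c • f) := by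
  obtain ⟨N, u, hu, rfl⟩ := hf
  refine ⟨N, fun i => Real.sqrt c • u i, fun i => ?_, ?_⟩
  · exact (homogeneousSubmodule (Fin n) ℝ d).smul_mem _ (hu i)
  · rw [Finset.smul_sum]
    refine Finset.sum_congr rfl fun i _ => ?_
    rw [smul_pow, Real.sq_sqrt hc]

set_option maxHeartbeats 1000000

lemma sum_sq_matrix {N r : ℕ} (C : Matrix (Fin N) (Fin r) ℝ)
    (b : Fin r → MvPolynomial (Fin n) ℝ) :
    ∑ i, (∑ j, C i j • b j) ^ 2 = ∑ k, ∑ l, (Cᴴ * C) k l • (b k * b l) := by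
  have hstep : ∀ i : Fin N, (∑ j, C i j • b j) ^ 2 = ∑ k, ∑ l, (C i k * C i l) • (b k * b l) := by
    intro i
    rw [sq, Finset.sum_mul_sum]
    exact Finset.sum_congr rfl fun k _ => Finset.sum_congr rfl fun l _ =>
      smul_mul_smul_comm _ _ _ _
  simp_rw [hstep]
  rw [Finset.sum_comm]
  refine Finset.sum_congr rfl fun k _ => ?_
  rw [Finset.sum_comm]
  refine Finset.sum_congr rfl fun l _ => ?_
  rw [Matrix.mul_apply, ← Finset.sum_smul]
  simp [Matrix.conjTranspose_apply]

lemma pad_squares {r m : ℕ} (hrm : r ≤ m) (h : Fin r → MvPolynomial (Fin n) ℝ)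
    (hh : ∀ j, (h j).IsHomogeneous d) :
    ∃ g : Fin m → MvPolynomial (Fin n) ℝ,
      (∀ i, (g i).IsHomogeneous d) ∧ ∑ j, (h j) ^ 2 = ∑ i, (g i) ^ 2 := by
  set g : Fin m → MvPolynomial (Fin n) ℝ :=
    fun i => if hi : (i : ℕ) < r then h ⟨i, hi⟩ else 0 with hg
  refine ⟨g, fun i => ?_, ?_⟩
  · simp only [hg]
    split
    · apply hh
    · exact isHomogeneous_zero _ _ _
  · calc ∑ j : Fin r, h j ^ 2
        = ∑ i ∈ (Finset.univ : Finset (Fin r)).map (Fin.castLEEmb hrm), g i ^ 2 := by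
          rw [Finset.sum_map]
          refine Finset.sum_congr rfl fun j _ => ?_
          have hj : ((Fin.castLEEmb hrm j : Fin m) : ℕ) < r := by simp [j.isLt]
          simp [hg, hj]
    _ = ∑ i : Fin m, g i ^ 2 := by
          refine Finset.sum_subset (Finset.subset_univ _) fun i _ hi => ?_
          have : ¬ ((i : ℕ) < r) := by
            intro hlt
            exact hi (by simp [Fin.castLEEmb]; exact ⟨⟨i, hlt⟩, by simp [Fin.castLE]⟩)
          simp [hg, this]

lemma IsSOSForm.exists_width {f : MvPolynomial (Fin n) ℝ} (hf : IsSOSForm n d f) :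
    ∃ g : Fin (Module.finrank ℝ (homogeneousSubmodule (Fin n) ℝ d)) → MvPolynomial (Fin n) ℝ,
      (∀ i, (g i).IsHomogeneous d) ∧ f = ∑ i, (g i) ^ 2 := by
  obtain ⟨N, u, hu, rfl⟩ := hf
  set V := Submodule.span ℝ (Set.range u) with hV
  have hVle : V ≤ homogeneousSubmodule (Fin n) ℝ d :=
    Submodule.span_le.2 (by rintro _ ⟨i, rfl⟩; exact hu i)
  haveI : FiniteDimensional ℝ V := FiniteDimensional.span_of_finite ℝ (Set.finite_range u)
  have hr : Module.finrank ℝ V ≤ Module.finrank ℝ (homogeneousSubmodule (Fin n) ℝ d) :=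
    Submodule.finrank_mono hVle
  set r := Module.finrank ℝ V with hrdef
  let bV := Module.finBasis ℝ V
  let b : Fin r → MvPolynomial (Fin n) ℝ := fun j => (bV j : MvPolynomial (Fin n) ℝ)
  have hb : ∀ j, (b j).IsHomogeneous d := fun j => hVle (bV j).2
  have hmem : ∀ i, u i ∈ V := fun i => Submodule.subset_span ⟨i, rfl⟩
  let A : Matrix (Fin N) (Fin r) ℝ := Matrix.of fun i j => bV.repr ⟨u i, hmem i⟩ j
  have hui : ∀ i, u i = ∑ j, A i j • b j := by
    intro i
    have h2 := congrArg (Subtype.val) (bV.sum_repr ⟨u i, hmem i⟩)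
    simp only [Submodule.coe_sum, Submodule.coe_smul] at h2
    exact h2.symm
  obtain ⟨B, hB⟩ : ∃ B : Matrix (Fin r) (Fin r) ℝ, Aᴴ * A = Bᴴ * B := by
    open scoped MatrixOrder in
    obtain ⟨X, hX, -, hXX⟩ := CFC.exists_sqrt_of_isSelfAdjoint_of_quasispectrumRestricts
      (Matrix.posSemidef_conjTranspose_mul_self A).isHermitian
      (QuasispectrumRestricts.nnreal_of_nonneg (Matrix.posSemidef_conjTranspose_mul_self A).nonneg)
    exact ⟨X, by rw [← Matrix.star_eq_conjTranspose X, hX.star_eq]; exact hXX.symm⟩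
  set h : Fin r → MvPolynomial (Fin n) ℝ := fun j => ∑ k, B j k • b k with hhdef
  have hhhom : ∀ j, (h j).IsHomogeneous d := by
    intro j
    exact (homogeneousSubmodule (Fin n) ℝ d).sum_mem
      (fun k _ => (homogeneousSubmodule (Fin n) ℝ d).smul_mem _ (hb k))
  have key : ∑ i, (u i) ^ 2 = ∑ j, (h j) ^ 2 := by
    have h1 : ∑ i, (u i) ^ 2 = ∑ k, ∑ l, (Aᴴ * A) k l • (b k * b l) := by
      simp_rw [fun i => hui i]
      exact sum_sq_matrix A b
    have h2 : ∑ j, (h j) ^ 2 = ∑ k, ∑ l, (Bᴴ * B) k l • (b k * b l) := sum_sq_matrix B b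
    rw [h1, h2, hB]
  obtain ⟨g, hg1, hg2⟩ := pad_squares hr h hhhom
  exact ⟨g, hg1, key.trans hg2⟩


lemma sum_smul_mul {m : ℕ} (c e : Fin m → ℝ) (q : Fin m → MvPolynomial (Fin n) ℝ) :
    (∑ j, c j • q j) * (∑ k, e k • q k) = ∑ j, ∑ k, (c j * e k) • (q j * q k) := by
  rw [Finset.sum_mul_sum]
  exact Finset.sum_congr rfl fun j _ => Finset.sum_congr rfl fun k _ =>
    smul_mul_smul_comm _ _ _ _

noncomputable def sqMap (n d : ℕ) (p : homogeneousSubmodule (Fin n) ℝ d) :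
    homogeneousSubmodule (Fin n) ℝ (2 * d) :=
  ⟨(p : MvPolynomial (Fin n) ℝ) ^ 2, by
    rw [mem_homogeneousSubmodule, two_mul, ← Nat.mul_two d]
    exact ((mem_homogeneousSubmodule _ _).1 p.2).pow 2⟩

noncomputable def Phi (n d : ℕ)
    (g : Fin (Module.finrank ℝ (homogeneousSubmodule (Fin n) ℝ d)) →
      homogeneousSubmodule (Fin n) ℝ d) :
    homogeneousSubmodule (Fin n) ℝ (2 * d) :=
  ∑ i, sqMap n d (g i)

lemma coe_Phi {n d : ℕ} (g : Fin (Module.finrank ℝ (homogeneousSubmodule (Fin n) ℝ d)) →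
      homogeneousSubmodule (Fin n) ℝ d) :
    ((Phi n d g : homogeneousSubmodule (Fin n) ℝ (2 * d)) : MvPolynomial (Fin n) ℝ)
      = ∑ i, ((g i : MvPolynomial (Fin n) ℝ)) ^ 2 := by
  simp [Phi, sqMap]

lemma sigmaCone_eq_range : SigmaCone n d = Set.range (Phi n d) := by
  ext f
  constructor
  · intro hf
    obtain ⟨g, hg, heq⟩ := IsSOSForm.exists_width hf
    refine ⟨fun i => ⟨g i, hg i⟩, ?_⟩
    apply Subtype.ext
    rw [coe_Phi]
    exact heq.symm
  · rintro ⟨g, rfl⟩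
    show IsSOSForm n d _
    rw [coe_Phi]
    exact ⟨_, fun i => (g i : MvPolynomial (Fin n) ℝ),
      fun i => (mem_homogeneousSubmodule _ _).1 (g i).2, rfl⟩

lemma continuous_sqMap : Continuous (sqMap n d) := by
  classical
  set m1 := Module.finrank ℝ (homogeneousSubmodule (Fin n) ℝ d) with hm1
  set b := Module.finBasis ℝ (homogeneousSubmodule (Fin n) ℝ d) with hbdef
  have hbh : ∀ j, ((b j : MvPolynomial (Fin n) ℝ)).IsHomogeneous d :=
    fun j => (mem_homogeneousSubmodule _ _).1 (b j).2
  set M : Fin m1 → Fin m1 → homogeneousSubmodule (Fin n) ℝ (2 * d) := fun j k =>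
    ⟨(b j : MvPolynomial (Fin n) ℝ) * (b k : MvPolynomial (Fin n) ℝ), by
      rw [mem_homogeneousSubmodule, two_mul]
      exact (hbh j).mul (hbh k)⟩ with hM
  have key : ∀ p, sqMap n d p = ∑ j, ∑ k, ((hsEquiv n d p j) * (hsEquiv n d p k)) • M j k := by
    intro p
    apply Subtype.ext
    have hp : (p : MvPolynomial (Fin n) ℝ)
        = ∑ j, hsEquiv n d p j • (b j : MvPolynomial (Fin n) ℝ) := by
      have h2 := congrArg (Subtype.val) (b.sum_repr p)
      simp only [Submodule.coe_sum, Submodule.coe_smul] at h2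
      rw [← h2]
      rfl
    calc ((sqMap n d p : homogeneousSubmodule (Fin n) ℝ (2*d)) : MvPolynomial (Fin n) ℝ)
        = (p : MvPolynomial (Fin n) ℝ) * (p : MvPolynomial (Fin n) ℝ) := by
          simp [sqMap, sq]
    _ = ∑ j, ∑ k, ((hsEquiv n d p j) * (hsEquiv n d p k)) •
          ((b j : MvPolynomial (Fin n) ℝ) * (b k : MvPolynomial (Fin n) ℝ)) := by
          rw [hp, sum_smul_mul]
    _ = _ := by
          simp only [Submodule.coe_sum, Submodule.coe_smul, hM]
  rw [show sqMap n d = fun p => ∑ j, ∑ k, ((hsEquiv n d p j) * (hsEquiv n d p k)) • M j k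
      from funext key]
  refine continuous_finset_sum _ fun j _ => continuous_finset_sum _ fun k _ => ?_
  exact (((continuous_apply j).comp (hsEquiv n d).continuous).mul
    ((continuous_apply k).comp (hsEquiv n d).continuous)).smul continuous_const

lemma continuous_Phi : Continuous (Phi n d) :=
  continuous_finset_sum _ fun i _ => continuous_sqMap.comp (continuous_apply i)


noncomputable def evalF (n k : ℕ) (x : Fin n → ℝ) :
    homogeneousSubmodule (Fin n) ℝ k →ₗ[ℝ] ℝ where
  toFun p := eval x (p : MvPolynomial (Fin n) ℝ)
  map_add' p q := by simp
  map_smul' c p := by simp [MvPolynomial.smul_eval]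

lemma exists_sep_points (n k : ℕ) : ∃ s : Finset (Fin n → ℝ),
    ∀ p : homogeneousSubmodule (Fin n) ℝ k, (∀ y ∈ s, evalF n k y p = 0) → p = 0 := by
  classical
  set 𝒮 : Set (Submodule ℝ (homogeneousSubmodule (Fin n) ℝ k)) :=
    {S | ∃ s : Finset (Fin n → ℝ), S = ⨅ y ∈ s, LinearMap.ker (evalF n k y)} with h𝒮
  have hne : 𝒮.Nonempty := ⟨⊤, ∅, by simp⟩
  obtain ⟨S0, ⟨s0, hs0⟩, hmin⟩ := IsArtinian.set_has_minimal 𝒮 hne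
  refine ⟨s0, fun p hp => ?_⟩
  have hpS0 : p ∈ S0 := by
    rw [hs0]
    simp only [Submodule.mem_iInf, LinearMap.mem_ker]
    intro y hy
    exact hp y hy
  -- show every element of S0 is zero
  have hS0bot : ∀ q ∈ S0, q = (0 : homogeneousSubmodule (Fin n) ℝ k) := by
    intro q hq
    by_contra hq0
    have : ∃ y : Fin n → ℝ, eval y (q : MvPolynomial (Fin n) ℝ) ≠ 0 := by
      by_contra hall
      push_neg at hall
      apply hq0
      apply Subtype.ext
      exact MvPolynomial.funext (R := ℝ) fun y => by simpa using hall y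
    obtain ⟨y, hy⟩ := this
    have hS' : S0 ⊓ LinearMap.ker (evalF n k y) ∈ 𝒮 := by
      refine ⟨insert y s0, ?_⟩
      rw [Finset.iInf_insert, ← hs0, inf_comm]
    refine hmin _ hS' (lt_of_le_of_ne inf_le_left fun hEq => ?_)
    have hq2 := hq
    rw [← hEq] at hq2
    exact hy hq2.2
  exact hS0bot p hpS0

lemma pi_norm_sq_le {τ : Type*} [Fintype τ] (v : τ → ℝ) : ‖v‖ ^ 2 ≤ ∑ t, (v t) ^ 2 := by
  have hnn : (0:ℝ) ≤ ∑ t, (v t) ^ 2 := Finset.sum_nonneg fun _ _ => sq_nonneg _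
  have h1 : ‖v‖ ≤ Real.sqrt (∑ t, (v t) ^ 2) := by
    refine (pi_norm_le_iff_of_nonneg (Real.sqrt_nonneg _)).2 fun t => ?_
    rw [Real.norm_eq_abs, ← Real.sqrt_sq_eq_abs]
    exact Real.sqrt_le_sqrt (Finset.single_le_sum (fun (x : τ) _ => sq_nonneg (v x))
      (Finset.mem_univ t))
  calc ‖v‖ ^ 2 ≤ (Real.sqrt (∑ t, (v t) ^ 2)) ^ 2 :=
        pow_le_pow_left₀ (norm_nonneg _) h1 2
  _ = _ := Real.sq_sqrt hnn

lemma exists_coercive (n d : ℕ) : ∃ c : ℝ, 0 < c ∧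
    ∀ g : Fin (Module.finrank ℝ (homogeneousSubmodule (Fin n) ℝ d)) →
        homogeneousSubmodule (Fin n) ℝ d,
      ∀ i, ‖hsEquiv n d (g i)‖ ^ 2 ≤ c * ‖hsEquiv n (2 * d) (Phi n d g)‖ := by
  classical
  obtain ⟨s, hs⟩ := exists_sep_points n d
  set τ := {y : Fin n → ℝ // y ∈ s}
  set ι : homogeneousSubmodule (Fin n) ℝ d →ₗ[ℝ] (τ → ℝ) :=
    LinearMap.pi (fun t => evalF n d t.1) with hι
  have hinj : Function.Injective ι := by
    rw [← LinearMap.ker_eq_bot, LinearMap.ker_eq_bot']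
    intro p hp
    refine hs p fun y hy => ?_
    exact congrFun hp ⟨y, hy⟩
  set ι' : (Fin (Module.finrank ℝ (homogeneousSubmodule (Fin n) ℝ d)) → ℝ) →ₗ[ℝ] (τ → ℝ) :=
    ι ∘ₗ ((hsEquiv n d).symm.toLinearEquiv.toLinearMap) with hι'
  have hinj' : Function.Injective ι' := by
    intro a b hab
    have := hinj hab
    exact (hsEquiv n d).symm.toLinearEquiv.injective this
  set E := LinearEquiv.ofInjective ι' hinj' with hE
  set C1 := ‖(E.symm.toLinearMap.toContinuousLinearMap)‖ with hC1
  have hb1 : ∀ v, ‖v‖ ≤ C1 * ‖ι' v‖ := by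
    intro v
    have h1 : v = E.symm (E v) := (E.symm_apply_apply v).symm
    have h2 : ‖E.symm (E v)‖ ≤ C1 * ‖E v‖ :=
      (E.symm.toLinearMap.toContinuousLinearMap).le_opNorm (E v)
    have h3 : ‖E v‖ = ‖ι' v‖ := by
      have : (E v : τ → ℝ) = ι' v := LinearEquiv.ofInjective_apply ι' v
      rw [← this]
      rfl
    rw [← h1, h3] at h2
    exact h2
  set D : τ → ℝ := fun t =>
    ‖((evalF n (2 * d) t.1).comp
        ((hsEquiv n (2 * d)).symm.toLinearEquiv.toLinearMap)).toContinuousLinearMap‖ with hD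
  have hDnn : ∀ t, 0 ≤ D t := fun t => norm_nonneg _
  have hb2 : ∀ (t : τ) (f : homogeneousSubmodule (Fin n) ℝ (2 * d)),
      |eval t.1 (f : MvPolynomial (Fin n) ℝ)| ≤ D t * ‖hsEquiv n (2 * d) f‖ := by
    intro t f
    have h1 := ((evalF n (2 * d) t.1).comp
        ((hsEquiv n (2 * d)).symm.toLinearEquiv.toLinearMap)).toContinuousLinearMap.le_opNorm
        (hsEquiv n (2 * d) f)
    have h2 : ((evalF n (2 * d) t.1).comp
        ((hsEquiv n (2 * d)).symm.toLinearEquiv.toLinearMap)) (hsEquiv n (2 * d) f)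
        = eval t.1 (f : MvPolynomial (Fin n) ℝ) := by
      simp only [LinearMap.comp_apply]
      rw [show ((hsEquiv n (2 * d)).symm.toLinearEquiv.toLinearMap) (hsEquiv n (2 * d) f) = f
        from (hsEquiv n (2 * d)).symm_apply_apply f]
      rfl
    simp only [LinearMap.coe_toContinuousLinearMap'] at h1
    rw [h2] at h1
    rwa [Real.norm_eq_abs] at h1
  refine ⟨C1 ^ 2 * (∑ t, D t) + 1, by positivity, fun g i => ?_⟩
  set F := Phi n d g with hF
  set X := ‖hsEquiv n (2 * d) F‖ with hX
  have hXnn : 0 ≤ X := norm_nonneg _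
  set p := g i with hp
  have hev : ∀ t : τ, (ι p t) ^ 2 ≤ D t * X := by
    intro t
    have hsq : (eval t.1 (p : MvPolynomial (Fin n) ℝ)) ^ 2
        ≤ eval t.1 (F : MvPolynomial (Fin n) ℝ) := by
      rw [coe_Phi, map_sum]
      have : ∀ j, eval t.1 ((g j : MvPolynomial (Fin n) ℝ) ^ 2)
          = (eval t.1 ((g j : MvPolynomial (Fin n) ℝ))) ^ 2 := fun j => by rw [map_pow]
      simp_rw [this]
      exact Finset.single_le_sum
        (fun j _ => sq_nonneg (eval t.1 ((g j : MvPolynomial (Fin n) ℝ)))) (Finset.mem_univ i)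
    have habs : eval t.1 (F : MvPolynomial (Fin n) ℝ) ≤ D t * X :=
      le_trans (le_abs_self _) (hb2 t F)
    exact le_trans hsq habs
  have hιp : ι' (hsEquiv n d p) = ι p := by
    rw [hι', LinearMap.comp_apply]
    congr 1
    exact (hsEquiv n d).symm_apply_apply p
  calc ‖hsEquiv n d p‖ ^ 2 ≤ (C1 * ‖ι' (hsEquiv n d p)‖) ^ 2 :=
        pow_le_pow_left₀ (norm_nonneg _) (hb1 _) 2
  _ = C1 ^ 2 * ‖ι p‖ ^ 2 := by rw [hιp, mul_pow]
  _ ≤ C1 ^ 2 * ∑ t, (ι p t) ^ 2 := by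
        exact mul_le_mul_of_nonneg_left (pi_norm_sq_le _) (sq_nonneg _)
  _ ≤ C1 ^ 2 * ∑ t, (D t * X) := by
        refine mul_le_mul_of_nonneg_left (Finset.sum_le_sum fun t _ => hev t) (sq_nonneg _)
  _ = C1 ^ 2 * (∑ t, D t) * X := by rw [← Finset.sum_mul, mul_assoc]
  _ ≤ (C1 ^ 2 * (∑ t, D t) + 1) * X := by nlinarith

lemma isClosed_sigmaCone (n d : ℕ) : IsClosed (SigmaCone n d) := by
  classical
  rw [sigmaCone_eq_range, ← Homeomorph.isClosed_image (hsEquiv n (2 * d)).toHomeomorph]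
  have himg : (hsEquiv n (2 * d)).toHomeomorph '' (Set.range (Phi n d))
      = Set.range (⇑(hsEquiv n (2 * d)) ∘ Phi n d) := (Set.range_comp _ _).symm
  rw [himg]
  apply IsSeqClosed.isClosed
  intro u x hu hux
  -- choose preimages
  choose γ hγ using hu
  simp only [Function.comp] at hγ
  have hR0' : ∀ k, (0:ℝ) ≤ ‖u k‖ := fun k => norm_nonneg _
  obtain ⟨c, hc, hcoer⟩ := exists_coercive n d
  obtain ⟨R, hR⟩ : ∃ R : ℝ, ∀ k, ‖u k‖ ≤ R := by
    have hb : BddAbove (Set.range fun k => ‖u k‖) := hux.norm.bddAbove_range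
    obtain ⟨R, hR⟩ := hb
    exact ⟨R, fun k => hR (Set.mem_range_self k)⟩
  set B := Real.sqrt (c * R) with hB
  set α : ℕ → (Fin (Module.finrank ℝ (homogeneousSubmodule (Fin n) ℝ d)) →
      (Fin (Module.finrank ℝ (homogeneousSubmodule (Fin n) ℝ d)) → ℝ)) :=
    fun k i => hsEquiv n d (γ k i) with hα
  have hαball : ∀ k, α k ∈ Metric.closedBall 0 B := by
    intro k
    rw [Metric.mem_closedBall, dist_zero_right]
    refine (pi_norm_le_iff_of_nonneg (Real.sqrt_nonneg _)).2 fun i => ?_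
    have hkey : ‖α k i‖ ^ 2 ≤ c * R := by
      calc ‖α k i‖ ^ 2 ≤ c * ‖hsEquiv n (2 * d) (Phi n d (γ k))‖ := hcoer (γ k) i
      _ = c * ‖u k‖ := by rw [hγ k]
      _ ≤ c * R := mul_le_mul_of_nonneg_left (hR k) hc.le
    rw [Real.le_sqrt (norm_nonneg _) (le_trans (sq_nonneg _) hkey)]
    exact hkey
  obtain ⟨β, -, φ, hφmono, hβconv⟩ :=
    tendsto_subseq_of_bounded Metric.isBounded_closedBall hαball
  set Ψ : (Fin (Module.finrank ℝ (homogeneousSubmodule (Fin n) ℝ d)) →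
      (Fin (Module.finrank ℝ (homogeneousSubmodule (Fin n) ℝ d)) → ℝ)) →
      (Fin (Module.finrank ℝ (homogeneousSubmodule (Fin n) ℝ (2 * d))) → ℝ) :=
    fun v => hsEquiv n (2 * d) (Phi n d (fun i => (hsEquiv n d).symm (v i))) with hΨ
  have hΨcont : Continuous Ψ :=
    (hsEquiv n (2 * d)).continuous.comp (continuous_Phi.comp
      (continuous_pi fun i => (hsEquiv n d).symm.continuous.comp (continuous_apply i)))
  have hΨα : ∀ k, Ψ (α k) = u k := by
    intro k
    have : (fun i => (hsEquiv n d).symm (α k i)) = γ k := by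
      funext i
      exact (hsEquiv n d).symm_apply_apply (γ k i)
    rw [hΨ]
    simp only [this]
    exact hγ k
  have h1 : Filter.Tendsto (fun j => Ψ (α (φ j))) Filter.atTop (nhds (Ψ β)) :=
    (hΨcont.tendsto β).comp hβconv
  have h2 : Filter.Tendsto (fun j => Ψ (α (φ j))) Filter.atTop (nhds x) := by
    simp_rw [hΨα]
    exact hux.comp hφmono.tendsto_atTop
  have hxΨ : x = Ψ β := tendsto_nhds_unique h2 h1
  exact ⟨fun i => (hsEquiv n d).symm (β i), hxΨ.symm⟩

lemma degree_single_one (i : Fin n) : (Finsupp.single i 1 : Fin n →₀ ℕ).degree = 1 := by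
  rw [Finsupp.degree_apply, Finsupp.support_single_ne_zero i one_ne_zero]
  simp

lemma finsupp_degree_split (a : ℕ) : ∀ (b : ℕ) (γ : Fin n →₀ ℕ), γ.degree = a + b →
    ∃ α β : Fin n →₀ ℕ, γ = α + β ∧ α.degree = a ∧ β.degree = b := by
  induction a with
  | zero => exact fun b γ h => ⟨0, γ, by simp, by simp, by simpa using h⟩
  | succ a ih =>
    intro b γ h
    have hγ0 : γ ≠ 0 := by
      intro h0
      rw [h0, map_zero] at h
      omega
    obtain ⟨i, hi⟩ : ∃ i, γ i ≠ 0 := by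
      by_contra hall
      push_neg at hall
      exact hγ0 (Finsupp.ext fun i => hall i)
    set γ' := γ - Finsupp.single i 1 with hγ'def
    have hadd : γ' + Finsupp.single i 1 = γ := by
      ext j
      rw [Finsupp.add_apply, hγ'def, Finsupp.tsub_apply]
      rcases eq_or_ne j i with rfl | hj
      · rw [Finsupp.single_eq_same]
        omega
      · rw [Finsupp.single_eq_of_ne' (Ne.symm hj)]
        omega
    have hdegadd : γ'.degree + 1 = γ.degree := by
      have h1 : (γ' + Finsupp.single i 1).degree = γ'.degree + (Finsupp.single i 1).degree := by
        simp only [Finsupp.degree_eq_weight_one, map_add]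
      rw [← hadd, h1, degree_single_one]
    have hdeg : γ'.degree = a + b := by omega
    obtain ⟨α, β, h1, h2, h3⟩ := ih b γ' hdeg
    refine ⟨α + Finsupp.single i 1, β, ?_, ?_, h3⟩
    · rw [← hadd, h1]
      abel
    · have : (α + Finsupp.single i 1).degree = α.degree + (Finsupp.single i 1).degree := by
        simp only [Finsupp.degree_eq_weight_one, map_add]
      rw [this, h2, degree_single_one]

lemma zero_mem_sigmaCone : (0 : homogeneousSubmodule (Fin n) ℝ (2 * d)) ∈ SigmaCone n d := by
  show IsSOSForm n d _
  rw [Submodule.coe_zero]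
  exact isSOSForm_zero

lemma monomial_mem_span_sigmaCone {γ : Fin n →₀ ℕ} (hγ : γ.degree = 2 * d) :
    (⟨monomial γ (1:ℝ), (mem_homogeneousSubmodule _ _).2 (isHomogeneous_monomial _ hγ)⟩ :
      homogeneousSubmodule (Fin n) ℝ (2 * d)) ∈ Submodule.span ℝ (SigmaCone n d) := by
  obtain ⟨α, β, hab, hα, hβ⟩ := finsupp_degree_split d d γ (by omega)
  set a : MvPolynomial (Fin n) ℝ := monomial α 1 with ha
  set b : MvPolynomial (Fin n) ℝ := monomial β 1 with hb
  have hahom : a.IsHomogeneous d := isHomogeneous_monomial _ hα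
  have hbhom : b.IsHomogeneous d := isHomogeneous_monomial _ hβ
  have hs1hom : ((a + b) ^ 2).IsHomogeneous (2 * d) := by
    rw [two_mul, ← Nat.mul_two d]
    exact (hahom.add hbhom).pow 2
  have hs2hom : ((a - b) ^ 2).IsHomogeneous (2 * d) := by
    rw [two_mul, ← Nat.mul_two d]
    exact (hahom.sub hbhom).pow 2
  set S1 : homogeneousSubmodule (Fin n) ℝ (2 * d) := ⟨(a + b) ^ 2, hs1hom⟩ with hS1
  set S2 : homogeneousSubmodule (Fin n) ℝ (2 * d) := ⟨(a - b) ^ 2, hs2hom⟩ with hS2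
  have hS1mem : S1 ∈ SigmaCone n d := by
    show IsSOSForm n d _
    exact ⟨1, fun _ => a + b, fun _ => hahom.add hbhom, by simp [hS1]⟩
  have hS2mem : S2 ∈ SigmaCone n d := by
    show IsSOSForm n d _
    exact ⟨1, fun _ => a - b, fun _ => hahom.sub hbhom, by simp [hS2]⟩
  have hkey : (⟨monomial γ (1:ℝ), (mem_homogeneousSubmodule _ _).2 (isHomogeneous_monomial _ hγ)⟩ :
      homogeneousSubmodule (Fin n) ℝ (2 * d)) = (4⁻¹ : ℝ) • S1 - (4⁻¹ : ℝ) • S2 := by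
    apply Subtype.ext
    have h4 : (a + b) ^ 2 - (a - b) ^ 2 = (4 : ℝ) • (a * b) := by
      rw [smul_eq_C_mul, map_ofNat]
      ring
    have hab2 : a * b = monomial γ (1:ℝ) := by
      rw [ha, hb, monomial_mul, ← hab, one_mul]
    calc (monomial γ (1:ℝ))
        = (4⁻¹ : ℝ) • ((4 : ℝ) • (a * b)) := by
          rw [smul_smul]
          norm_num [hab2]
    _ = (4⁻¹ : ℝ) • ((a + b) ^ 2 - (a - b) ^ 2) := by rw [h4]
    _ = (4⁻¹ : ℝ) • ((a + b) ^ 2) - (4⁻¹ : ℝ) • ((a - b) ^ 2) := smul_sub _ _ _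
    _ = _ := rfl
  rw [hkey]
  exact Submodule.sub_mem _
    (Submodule.smul_mem _ _ (Submodule.subset_span hS1mem))
    (Submodule.smul_mem _ _ (Submodule.subset_span hS2mem))

lemma span_sigmaCone (n d : ℕ) : Submodule.span ℝ (SigmaCone n d) = ⊤ := by
  classical
  rw [eq_top_iff]
  rintro f -
  have hfhom : (f : MvPolynomial (Fin n) ℝ).IsHomogeneous (2 * d) :=
    (mem_homogeneousSubmodule _ _).1 f.2
  have hdeg : ∀ γ ∈ (f : MvPolynomial (Fin n) ℝ).support, Finsupp.degree γ = 2 * d := by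
    intro γ hγ
    have := hfhom (MvPolynomial.mem_support_iff.1 hγ)
    rwa [Finsupp.degree_eq_weight_one]
  have hrepr : f = ∑ γ ∈ (f : MvPolynomial (Fin n) ℝ).support.attach,
      (coeff γ.1 (f : MvPolynomial (Fin n) ℝ)) •
        (⟨monomial γ.1 (1:ℝ), (mem_homogeneousSubmodule _ _).2
          (isHomogeneous_monomial _ (hdeg γ.1 γ.2))⟩ :
            homogeneousSubmodule (Fin n) ℝ (2 * d)) := by
    apply Subtype.ext
    push_cast [Submodule.coe_sum, Submodule.coe_smul]
    conv_lhs => rw [(f : MvPolynomial (Fin n) ℝ).as_sum]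
    rw [← Finset.sum_attach ((f : MvPolynomial (Fin n) ℝ).support)
      (fun γ => monomial γ (coeff γ (f : MvPolynomial (Fin n) ℝ)))]
    refine Finset.sum_congr rfl fun γ _ => ?_
    rw [smul_monomial, smul_eq_mul, mul_one]
  rw [hrepr]
  exact Submodule.sum_mem _ fun γ _ => Submodule.smul_mem _ _
    (monomial_mem_span_sigmaCone (hdeg γ.1 γ.2))

lemma convex_sigmaCone (n d : ℕ) : Convex ℝ (SigmaCone n d) := by
  intro f hf g hg a b ha hb _
  show IsSOSForm n d ((a • f + b • g : homogeneousSubmodule (Fin n) ℝ (2 * d)) :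
    MvPolynomial (Fin n) ℝ)
  rw [Submodule.coe_add, Submodule.coe_smul, Submodule.coe_smul]
  exact (IsSOSForm.smul ha hf).add (IsSOSForm.smul hb hg)

lemma interior_sigmaCone_nonempty (n d : ℕ) : (interior (SigmaCone n d)).Nonempty := by
  have himg : (hsEquiv n (2 * d)).toHomeomorph '' interior (SigmaCone n d)
      = interior ((hsEquiv n (2 * d)).toHomeomorph '' SigmaCone n d) :=
    Homeomorph.image_interior _ _
  suffices h : (interior ((hsEquiv n (2 * d)).toHomeomorph '' SigmaCone n d)).Nonempty by
    obtain ⟨y, hy⟩ := h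
    rw [← himg] at hy
    obtain ⟨x, hx, -⟩ := hy
    exact ⟨x, hx⟩
  set S : Set (Fin (Module.finrank ℝ (homogeneousSubmodule (Fin n) ℝ (2 * d))) → ℝ) :=
    ⇑(hsEquiv n (2 * d)).toHomeomorph '' SigmaCone n d with hSdef
  have hScoe : S = ⇑((hsEquiv n (2 * d)).toLinearEquiv.toLinearMap) '' SigmaCone n d := rfl
  have hconv : Convex ℝ S := by
    rw [hScoe]
    exact (convex_sigmaCone n d).linear_image _
  have hspan : Submodule.span ℝ S = ⊤ := by
    rw [hScoe, Submodule.span_image, span_sigmaCone, Submodule.map_top, LinearMap.range_eq_top]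
    exact (hsEquiv n (2 * d)).toLinearEquiv.surjective
  have h0S : (0 : Fin (Module.finrank ℝ (homogeneousSubmodule (Fin n) ℝ (2 * d))) → ℝ) ∈ S := by
    rw [hScoe]
    exact ⟨0, zero_mem_sigmaCone, map_zero _⟩
  have hvec : vectorSpan ℝ S = ⊤ := by
    rw [eq_top_iff, ← hspan, Submodule.span_le]
    intro x hx
    have : x = x -ᵥ (0 : _) := by simp
    rw [this]
    exact vsub_mem_vectorSpan _ hx h0S
  have haff : affineSpan ℝ S = ⊤ :=
    (AffineSubspace.affineSpan_eq_top_iff_vectorSpan_eq_top_of_nonempty ℝ _ _ ⟨0, h0S⟩).2 hvec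
  exact (hconv.interior_nonempty_iff_affineSpan_eq_top).2 haff
theorem sigmaCone_isClosed_convex_cone_nonempty_interior (n d : ℕ) :
    IsClosed (SigmaCone n d) ∧ Convex ℝ (SigmaCone n d) ∧
    (∀ c : ℝ, 0 ≤ c → ∀ f ∈ SigmaCone n d, c • f ∈ SigmaCone n d) ∧
    (interior (SigmaCone n d)).Nonempty := by
  refine ⟨isClosed_sigmaCone n d, convex_sigmaCone n d, fun c hc f hf => ?_,
    interior_sigmaCone_nonempty n d⟩
  show IsSOSForm n d _
  rw [Submodule.coe_smul]
  exact IsSOSForm.smul hc hf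
end

section
/- A form f of degree 2d lies in the interior of the sums-of-squares cone Σ_{2d} if and only if f admits a representation f = f_1^2 + ... + f_N^2 in which f_1, ..., f_N span the space R[x]_d of all degree-d forms. -/
open MvPolynomial Finsupp

section Helpers
open Matrix

lemma degree_eq_sum_univ {n : ℕ} (f : Fin n →₀ ℕ) : f.degree = ∑ i, f i :=
  Finset.sum_subset (Finset.subset_univ _) (fun _ _ hi => Finsupp.notMem_support_iff.mp hi)

lemma degree_add' {n : ℕ} (a b : Fin n →₀ ℕ) : (a + b).degree = a.degree + b.degree := by
  simp [degree_eq_sum_univ, Finsupp.add_apply, Finset.sum_add_distrib]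

lemma exists_le_degree {n : ℕ} (m : ℕ) (s : Fin n →₀ ℕ) (hm : m ≤ s.degree) :
    ∃ t : Fin n →₀ ℕ, t ≤ s ∧ t.degree = m := by
  induction m with
  | zero => exact ⟨0, zero_le, by simp⟩
  | succ m ih =>
    obtain ⟨t, hts, htd⟩ := ih (by omega)
    have hex : ∃ i, t i < s i := by
      by_contra hcon
      push_neg at hcon
      have hst : s ≤ t := Finsupp.le_def.mpr hcon
      rw [le_antisymm hts hst] at htd
      omega
    obtain ⟨i, hi⟩ := hex
    refine ⟨t + Finsupp.single i 1, ?_, ?_⟩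
    · rw [Finsupp.le_def]
      intro j
      rcases eq_or_ne j i with rfl | hji
      · simp only [Finsupp.add_apply, Finsupp.single_apply]
        simp only [if_pos rfl, if_true, eq_self_iff_true]
        omega
      · have := Finsupp.le_def.mp hts j
        simp only [Finsupp.add_apply, Finsupp.single_apply, if_neg (Ne.symm hji)]
        omega
    · rw [degree_add', htd]
      rw [degree_eq_sum_univ]
      simp [Finsupp.single_apply, Finset.sum_ite_eq']

lemma homogeneousSubmodule_eq_span (n d : ℕ) :
    homogeneousSubmodule (Fin n) ℝ d =
      Submodule.span ℝ ((fun s : Fin n →₀ ℕ => (monomial s (1 : ℝ))) '' {s | s.degree = d}) := by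
  apply le_antisymm
  · intro p hp
    rw [mem_homogeneousSubmodule] at hp
    rw [← p.support_sum_monomial_coeff]
    apply Submodule.sum_mem
    intro s hs
    have hd : s.degree = d := by
      by_contra hcon
      exact (MvPolynomial.mem_support_iff.mp hs) (hp.coeff_eq_zero hcon)
    have he : (monomial s (coeff s p) : MvPolynomial (Fin n) ℝ) = (coeff s p) • monomial s 1 := by
      rw [MvPolynomial.smul_monomial, smul_eq_mul, mul_one]
    rw [he]
    exact Submodule.smul_mem _ _ (Submodule.subset_span ⟨s, hd, rfl⟩)
  · rw [Submodule.span_le]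
    rintro x ⟨s, hs, rfl⟩
    exact isHomogeneous_monomial 1 hs

lemma exists_homog_span (n d : ℕ) :
    ∃ (m : ℕ) (p : Fin m → MvPolynomial (Fin n) ℝ),
      (∀ k, (p k).IsHomogeneous d) ∧
      Submodule.span ℝ (Set.range p) = homogeneousSubmodule (Fin n) ℝ d := by
  classical
  have hfin : {s : Fin n →₀ ℕ | s.degree = d}.Finite := by
    apply Set.Finite.subset (Set.finite_Icc (0 : Fin n →₀ ℕ) (Finsupp.equivFunOnFinite.symm fun _ => d))
    intro s hs
    rw [Set.mem_Icc]
    refine ⟨zero_le, Finsupp.le_def.mpr fun i => ?_⟩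
    have := Finsupp.le_degree i s
    simp only [Set.mem_setOf_eq] at hs
    simpa [hs] using this.trans_eq hs
  let F := hfin.toFinset
  refine ⟨F.card, fun k => monomial ((F.equivFin.symm k : F) : Fin n →₀ ℕ) 1, fun k => ?_, ?_⟩
  · apply isHomogeneous_monomial
    have := (F.equivFin.symm k).2
    rwa [Set.Finite.mem_toFinset] at this
  · have hr : Set.range (fun k => monomial ((F.equivFin.symm k : F) : Fin n →₀ ℕ) (1 : ℝ)) =
        (fun s : Fin n →₀ ℕ => monomial s (1 : ℝ)) '' {s | s.degree = d} := by
      ext x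
      constructor
      · rintro ⟨k, rfl⟩
        exact ⟨_, hfin.mem_toFinset.mp (F.equivFin.symm k).2, rfl⟩
      · rintro ⟨s, hs, rfl⟩
        exact ⟨F.equivFin ⟨s, hfin.mem_toFinset.mpr hs⟩, by simp⟩
    rw [hr, ← homogeneousSubmodule_eq_span]


lemma sum_sq_eq_gram {n N : ℕ} (g : Fin N → MvPolynomial (Fin n) ℝ)
    (B : Matrix (Fin N) (Fin N) ℝ) :
    ∑ k, (∑ i, B k i • g i) ^ 2 = ∑ i, ∑ j, (Bᵀ * B) i j • (g i * g j) := by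
  have key : ∀ k, (∑ i, B k i • g i) ^ 2 = ∑ i, ∑ j, (B k i * B k j) • (g i * g j) := by
    intro k
    rw [sq, Finset.sum_mul_sum]
    refine Finset.sum_congr rfl fun i _ => Finset.sum_congr rfl fun j _ => ?_
    rw [smul_mul_smul_comm]
  simp_rw [key]
  rw [Finset.sum_comm]
  refine Finset.sum_congr rfl fun i _ => ?_
  rw [Finset.sum_comm]
  refine Finset.sum_congr rfl fun j _ => ?_
  rw [Matrix.mul_apply, Finset.sum_smul]
  exact Finset.sum_congr rfl fun k _ => by rw [Matrix.transpose_apply]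

lemma posSemidef_one_add {N : ℕ} (M : Matrix (Fin N) (Fin N) ℝ) (hsym : M.IsHermitian)
    (hb : ∀ i j, |M i j| ≤ 1 / (N + 1)) : ((1 : Matrix (Fin N) (Fin N) ℝ) + M).PosSemidef := by
  set δ : ℝ := 1 / (N + 1) with hδdef
  have hδpos : 0 < δ := by positivity
  refine Matrix.PosSemidef.of_dotProduct_mulVec_nonneg (Matrix.isHermitian_one.add hsym) fun x => ?_
  have hstar : star x = x := funext fun i => rfl
  rw [hstar, Matrix.add_mulVec, Matrix.one_mulVec, dotProduct_add]
  set s : ℝ := ∑ i, x i ^ 2 with hs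
  have hs0 : 0 ≤ s := Finset.sum_nonneg fun i _ => sq_nonneg _
  have hq1 : x ⬝ᵥ x = s := by simp [dotProduct, hs, sq]
  have hq2 : x ⬝ᵥ M.mulVec x = ∑ i, ∑ j, x i * (M i j * x j) := by
    simp [dotProduct, Matrix.mulVec, Finset.mul_sum]
  have habs : |x ⬝ᵥ M.mulVec x| ≤ δ * (N * s) := by
    have hsum2 : (∑ i, |x i|) ^ 2 ≤ N * s := by
      have := sq_sum_le_card_mul_sum_sq (s := (Finset.univ : Finset (Fin N)))
        (f := fun i => |x i|)
      simpa [Finset.card_univ, sq_abs, hs] using this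
    calc |x ⬝ᵥ M.mulVec x| = |∑ i, ∑ j, x i * (M i j * x j)| := by rw [hq2]
      _ ≤ ∑ i, |∑ j, x i * (M i j * x j)| := Finset.abs_sum_le_sum_abs _ _
      _ ≤ ∑ i, ∑ j, |x i * (M i j * x j)| :=
          Finset.sum_le_sum fun i _ => Finset.abs_sum_le_sum_abs _ _
      _ ≤ ∑ i, ∑ j, δ * (|x i| * |x j|) := by
          refine Finset.sum_le_sum fun i _ => Finset.sum_le_sum fun j _ => ?_
          rw [abs_mul, abs_mul]
          calc |x i| * (|M i j| * |x j|) ≤ |x i| * (δ * |x j|) := by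
                have := hb i j
                gcongr
            _ = δ * (|x i| * |x j|) := by ring
      _ = δ * ((∑ i, |x i|) * (∑ j, |x j|)) := by
          simp_rw [← Finset.mul_sum]
          rw [← Finset.sum_mul]
      _ = δ * (∑ i, |x i|) ^ 2 := by ring
      _ ≤ δ * (N * s) := by
          have := hsum2
          gcongr
  have hδN : δ * N ≤ 1 := by
    rw [hδdef]
    rw [div_mul_eq_mul_div, mul_comm]
    apply div_le_one_of_le₀ <;> nlinarith [Nat.cast_nonneg (α := ℝ) N]
  have h1 : -(x ⬝ᵥ M.mulVec x) ≤ δ * (N * s) := by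
    have := neg_abs_le (x ⬝ᵥ M.mulVec x); linarith [habs]
  have h2 : δ * (N * s) ≤ s := by
    calc δ * (N * s) = (δ * N) * s := by ring
      _ ≤ 1 * s := by gcongr
      _ = s := one_mul s
  rw [hq1]
  linarith

lemma isSOS_of_gram_psd {n d N : ℕ} (g : Fin N → MvPolynomial (Fin n) ℝ)
    (hg : ∀ i, (g i).IsHomogeneous d) (A : Matrix (Fin N) (Fin N) ℝ) (hA : A.PosSemidef) :
    IsSOSForm n d (∑ i, ∑ j, A i j • (g i * g j)) := by
  obtain ⟨B, hB0⟩ : ∃ B : Matrix (Fin N) (Fin N) ℝ, A = star B * B := by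
    open scoped MatrixOrder in exact CStarAlgebra.nonneg_iff_eq_star_mul_self.mp hA.nonneg
  have hB : A = Bᴴ * B := by rw [hB0, Matrix.star_eq_conjTranspose]
  have hBt : Bᴴ = Bᵀ := by
    ext i j
    simp [Matrix.conjTranspose_apply]
  refine ⟨N, fun k => ∑ i, B k i • g i, fun k => ?_, ?_⟩
  · refine MvPolynomial.IsHomogeneous.sum _ _ _ fun i _ => ?_
    rw [MvPolynomial.smul_eq_C_mul]
    exact (hg i).C_mul _
  · rw [sum_sq_eq_gram, ← hBt, ← hB]

lemma sym_sum {N : ℕ} {P : Type*} [AddCommMonoid P] [Module ℝ P]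
    (c : Fin N × Fin N → ℝ) (z : Fin N → Fin N → P) (hz : ∀ i j, z i j = z j i) :
    ∑ i, ∑ j, ((c (i, j) + c (j, i)) / 2) • z i j = ∑ i, ∑ j, c (i, j) • z i j := by
  have key : ∑ i, ∑ j, (c (j, i) / 2) • z i j = ∑ i, ∑ j, (c (i, j) / 2) • z i j := by
    rw [Finset.sum_comm]
    exact Finset.sum_congr rfl fun i _ => Finset.sum_congr rfl fun j _ => by rw [hz]
  calc ∑ i, ∑ j, ((c (i, j) + c (j, i)) / 2) • z i j
      = ∑ i, ∑ j, ((c (i, j) / 2) • z i j + (c (j, i) / 2) • z i j) := by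
        simp_rw [add_div, add_smul]
    _ = (∑ i, ∑ j, (c (i, j) / 2) • z i j) + ∑ i, ∑ j, (c (j, i) / 2) • z i j := by
        simp_rw [Finset.sum_add_distrib]
    _ = ∑ i, ∑ j, c (i, j) • z i j := by
        rw [key, ← Finset.sum_add_distrib]
        refine Finset.sum_congr rfl fun i _ => ?_
        rw [← Finset.sum_add_distrib]
        refine Finset.sum_congr rfl fun j _ => ?_
        rw [← add_smul, add_halves]

end Helpers

set_option maxHeartbeats 1000000 in
set_option synthInstance.maxHeartbeats 200000 in
open scoped Pointwise in
theorem mem_interior_sigmaCone_iff_spanning_sos (n d : ℕ)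
    (f : homogeneousSubmodule (Fin n) ℝ (2 * d)) :
    f ∈ interior (SigmaCone n d) ↔
      ∃ (N : ℕ) (g : Fin N → MvPolynomial (Fin n) ℝ),
        (∀ i, (g i).IsHomogeneous d) ∧
        (f : MvPolynomial (Fin n) ℝ) = ∑ i, (g i) ^ 2 ∧
        Submodule.span ℝ (Set.range g) = homogeneousSubmodule (Fin n) ℝ d := by
  classical
  haveI hMT : IsModuleTopology ℝ (homogeneousSubmodule (Fin n) ℝ (2 * d)) := ⟨rfl⟩
  haveI hCA : ContinuousAdd (homogeneousSubmodule (Fin n) ℝ (2 * d)) :=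
    IsModuleTopology.toContinuousAdd ℝ _
  constructor
  · intro hf
    obtain ⟨m, p, hp, hps⟩ := exists_homog_span n d
    have hq : (∑ k, (p k) ^ 2 : MvPolynomial (Fin n) ℝ).IsHomogeneous (2 * d) := by
      refine MvPolynomial.IsHomogeneous.sum _ _ _ fun k _ => ?_
      simpa [mul_comm] using (hp k).pow 2
    set Q : homogeneousSubmodule (Fin n) ℝ (2 * d) := ⟨∑ k, (p k) ^ 2, hq⟩ with hQdef
    have hcont : Continuous (fun t : ℝ => f + t • (-Q)) :=
      continuous_const.add (continuous_id.smul continuous_const)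
    have h0 : (fun t : ℝ => f + t • (-Q)) 0 ∈ interior (SigmaCone n d) := by simpa using hf
    have hopen : IsOpen ((fun t : ℝ => f + t • (-Q)) ⁻¹' interior (SigmaCone n d)) :=
      isOpen_interior.preimage hcont
    obtain ⟨ε, hε, hball⟩ := Metric.isOpen_iff.mp hopen 0 h0
    set c : ℝ := ε / 2 with hcdef
    have hc : 0 < c := by positivity
    have hmem : f + c • (-Q) ∈ SigmaCone n d := by
      apply interior_subset
      apply hball
      rw [Metric.mem_ball, Real.dist_eq]
      rw [sub_zero, abs_of_pos hc]
      rw [hcdef]; linarith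
    obtain ⟨N, h, hh, hsum⟩ := hmem
    have hcoe : (f : MvPolynomial (Fin n) ℝ) = (∑ i, h i ^ 2) + c • ∑ k, (p k) ^ 2 := by
      have h2 : ((f + c • -Q : homogeneousSubmodule (Fin n) ℝ (2 * d)) : MvPolynomial (Fin n) ℝ)
          = (f : MvPolynomial (Fin n) ℝ) - c • (∑ k, (p k) ^ 2) := by
        push_cast [hQdef]
        rw [smul_neg, sub_eq_add_neg]
      rw [h2] at hsum
      exact sub_eq_iff_eq_add.mp hsum
    refine ⟨N + m, Fin.append h (fun k => Real.sqrt c • p k), ?_, ?_, ?_⟩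
    · intro i
      refine Fin.addCases (fun i0 => ?_) (fun k0 => ?_) i
      · rw [Fin.append_left]; exact hh i0
      · rw [Fin.append_right, MvPolynomial.smul_eq_C_mul]
        exact (hp k0).C_mul _
    · rw [Fin.sum_univ_add]
      simp only [Fin.append_left, Fin.append_right]
      rw [hcoe]
      congr 1
      rw [Finset.smul_sum]
      refine Finset.sum_congr rfl fun k _ => ?_
      rw [smul_pow, Real.sq_sqrt hc.le]
    · apply le_antisymm
      · rw [Submodule.span_le]
        rintro x ⟨i, rfl⟩
        refine Fin.addCases (fun i0 => ?_) (fun k0 => ?_) i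
        · rw [Fin.append_left]; exact hh i0
        · rw [Fin.append_right, MvPolynomial.smul_eq_C_mul]
          exact (hp k0).C_mul _
      · rw [← hps, Submodule.span_le]
        rintro x ⟨k, rfl⟩
        have hsqrt : Real.sqrt c ≠ 0 := by positivity
        have : p k = (Real.sqrt c)⁻¹ • (Real.sqrt c • p k) := by
          rw [smul_smul, inv_mul_cancel₀ hsqrt, one_smul]
        rw [this]
        refine Submodule.smul_mem _ _ (Submodule.subset_span ?_)
        exact ⟨Fin.natAdd N k, by rw [Fin.append_right]⟩
  · rintro ⟨N, g, hg, hfg, hspan⟩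
    set v : Fin N × Fin N → MvPolynomial (Fin n) ℝ := fun q => g q.1 * g q.2 with hvdef
    have hgij : ∀ q : Fin N × Fin N, (g q.1 * g q.2).IsHomogeneous (2 * d) := fun q => by
      simpa [two_mul] using (hg q.1).mul (hg q.2)
    set T0 : (Fin N × Fin N → ℝ) →ₗ[ℝ] MvPolynomial (Fin n) ℝ :=
      Fintype.linearCombination ℝ v with hT0def
    have hT0apply : ∀ cc, T0 cc = ∑ q, cc q • v q := fun cc => rfl
    have hT0mem : ∀ cc, T0 cc ∈ homogeneousSubmodule (Fin n) ℝ (2 * d) := by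
      intro cc
      rw [hT0apply]
      exact Submodule.sum_mem _ fun q _ => Submodule.smul_mem _ _ (hgij q)
    set T : (Fin N × Fin N → ℝ) →ₗ[ℝ] homogeneousSubmodule (Fin n) ℝ (2 * d) :=
      T0.codRestrict _ hT0mem with hTdef
    have hle : homogeneousSubmodule (Fin n) ℝ (2 * d) ≤ Submodule.span ℝ (Set.range v) := by
      have hle2 : Submodule.span ℝ (Set.range g * Set.range g) ≤
          Submodule.span ℝ (Set.range v) := by
        rw [Submodule.span_le]
        rintro x hx
        rw [Set.mem_mul] at hx
        obtain ⟨a, ⟨i, rfl⟩, b, ⟨j, rfl⟩, rfl⟩ := hx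
        exact Submodule.subset_span ⟨(i, j), rfl⟩
      rw [homogeneousSubmodule_eq_span n (2 * d), Submodule.span_le]
      rintro x ⟨s, hs, rfl⟩
      simp only [Set.mem_setOf_eq] at hs
      obtain ⟨t, hts, htd⟩ := exists_le_degree d s (by rw [hs]; omega)
      have hsplit : t + (s - t) = s := by
        ext i
        have := Finsupp.le_def.mp hts i
        rw [Finsupp.add_apply, Finsupp.tsub_apply]
        omega
      have hu : (s - t).degree = d := by
        have hda := degree_add' t (s - t)
        rw [hsplit, hs] at hda
        omega
      have hmono : (monomial s (1 : ℝ) : MvPolynomial (Fin n) ℝ)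
          = monomial t 1 * monomial (s - t) 1 := by
        rw [MvPolynomial.monomial_mul, hsplit, mul_one]
      have h1 : (monomial t 1 : MvPolynomial (Fin n) ℝ) ∈ Submodule.span ℝ (Set.range g) := by
        rw [hspan]; exact isHomogeneous_monomial 1 htd
      have h2 : (monomial (s - t) 1 : MvPolynomial (Fin n) ℝ) ∈
          Submodule.span ℝ (Set.range g) := by
        rw [hspan]; exact isHomogeneous_monomial 1 hu
      have hmm := Submodule.mul_mem_mul h1 h2
      rw [Submodule.span_mul_span] at hmm
      show (monomial s (1 : ℝ) : MvPolynomial (Fin n) ℝ) ∈ Submodule.span ℝ (Set.range v)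
      rw [hmono]
      exact hle2 hmm
    have hTsurj : Function.Surjective T := by
      intro q
      have hq : (q : MvPolynomial (Fin n) ℝ) ∈ Submodule.span ℝ (Set.range v) := hle q.2
      rw [← Fintype.range_linearCombination ℝ v] at hq
      obtain ⟨cc, hcc⟩ := hq
      exact ⟨cc, Subtype.ext hcc⟩
    haveI hproj : Module.Projective ℝ (homogeneousSubmodule (Fin n) ℝ (2 * d)) :=
      Module.Projective.of_free
    obtain ⟨S, hS⟩ :=
      LinearMap.exists_rightInverse_of_surjective T (LinearMap.range_eq_top.mpr hTsurj)
    set δ : ℝ := 1 / (N + 1) with hδdef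
    have hδpos : 0 < δ := by positivity
    set box : Set (Fin N × Fin N → ℝ) := {w | ∀ q, |w q| < δ} with hboxdef
    have hbox : IsOpen box := by
      have hbeq : box = ⋂ q, (fun w : Fin N × Fin N → ℝ => w q) ⁻¹' (Set.Ioo (-δ) δ) := by
        ext w
        simp [hboxdef, abs_lt]
      rw [hbeq]
      exact isOpen_iInter_of_finite fun q => isOpen_Ioo.preimage (continuous_apply q)
    have hScont : Continuous S := IsModuleTopology.continuous_of_linearMap S
    set U : Set (homogeneousSubmodule (Fin n) ℝ (2 * d)) :=
      (fun h => h + (-f)) ⁻¹' (S ⁻¹' box) with hUdef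
    have hUopen : IsOpen U :=
      ((hbox.preimage hScont).preimage (continuous_id.add continuous_const))
    have hfU : f ∈ U := by
      have : f + (-f) = (0 : homogeneousSubmodule (Fin n) ℝ (2 * d)) := add_neg_cancel f
      simp only [hUdef, Set.mem_preimage, this, map_zero]
      intro q
      simpa using hδpos
    refine mem_interior.mpr ⟨U, ?_, hUopen, hfU⟩
    intro h hU
    set q : homogeneousSubmodule (Fin n) ℝ (2 * d) := h + (-f) with hqdef
    have hqbox : S q ∈ box := hU
    set cc : Fin N × Fin N → ℝ := S q with hccdef
    have hTq : T cc = q := by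
      rw [hccdef, ← LinearMap.comp_apply, hS, LinearMap.id_apply]
    have hq_poly : (q : MvPolynomial (Fin n) ℝ) = ∑ pq, cc pq • v pq := by
      rw [← hTq]
      rfl
    have hh_poly : (h : MvPolynomial (Fin n) ℝ)
        = (∑ i, g i ^ 2) + ∑ i, ∑ j, cc (i, j) • (g i * g j) := by
      have e1 : (h : MvPolynomial (Fin n) ℝ) = (f : MvPolynomial (Fin n) ℝ) + q := by
        rw [hqdef]
        push_cast
        ring
      rw [e1, hfg, hq_poly, Fintype.sum_prod_type]
    set Msym : Matrix (Fin N) (Fin N) ℝ :=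
      Matrix.of fun i j => (cc (i, j) + cc (j, i)) / 2 with hMdef
    have hherm : Msym.IsHermitian := by
      ext i j
      simp only [Matrix.conjTranspose_apply, hMdef, Matrix.of_apply, star_trivial]
      ring
    have hMb : ∀ i j, |Msym i j| ≤ 1 / (N + 1) := by
      intro i j
      have b1 := hqbox (i, j)
      have b2 := hqbox (j, i)
      rw [hδdef] at b1 b2
      simp only [hMdef, Matrix.of_apply]
      rw [abs_div, abs_two]
      rw [div_le_iff₀ (by norm_num : (0:ℝ) < 2)]
      calc |cc (i, j) + cc (j, i)| ≤ |cc (i, j)| + |cc (j, i)| := abs_add_le _ _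
        _ ≤ 1 / (↑N + 1) * 2 := by rw [hccdef] at b1 b2 ⊢; linarith
    have hpsd := posSemidef_one_add Msym hherm hMb
    have hident : ∑ i, ∑ j, ((1 : Matrix (Fin N) (Fin N) ℝ) + Msym) i j • (g i * g j)
        = (h : MvPolynomial (Fin n) ℝ) := by
      have e1 : ∀ i j : Fin N, ((1 : Matrix (Fin N) (Fin N) ℝ) + Msym) i j • (g i * g j)
          = (if i = j then g i * g j else 0) + Msym i j • (g i * g j) := by
        intro i j
        rw [Matrix.add_apply, add_smul, Matrix.one_apply]
        by_cases hij : i = j <;> simp [hij]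
      simp_rw [e1, Finset.sum_add_distrib]
      have e2 : ∀ i : Fin N, (∑ j, if i = j then g i * g j else 0) = g i * g i := by
        intro i
        rw [Finset.sum_ite_eq]
        simp
      simp_rw [e2]
      have e3 : ∑ i, ∑ j, Msym i j • (g i * g j) = ∑ i, ∑ j, cc (i, j) • (g i * g j) := by
        have := sym_sum cc (fun i j => g i * g j) (fun i j => mul_comm _ _)
        simpa [hMdef] using this
      rw [e3, hh_poly]
      simp_rw [sq]
    show IsSOSForm n d (h : MvPolynomial (Fin n) ℝ)
    rw [← hident]
    exact isSOS_of_gram_psd g hg _ hpsd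
end

section
/- If f and g are sos forms, then U_f · U_g ⊆ U_{fg}, where U_f · U_g denotes the linear span of products uv with u ∈ U_f, v ∈ U_g. -/
open MvPolynomial Finsupp

lemma sos_add {n d : ℕ} {f g : MvPolynomial (Fin n) ℝ}
    (hf : IsSOSForm n d f) (hg : IsSOSForm n d g) : IsSOSForm n d (f + g) := by
  obtain ⟨N, u, hu, rfl⟩ := hf
  obtain ⟨M, v, hv, rfl⟩ := hg
  refine ⟨N + M, Fin.append u v, ?_, ?_⟩
  · intro i
    refine Fin.addCases (fun j => ?_) (fun j => ?_) i
    · simpa using hu j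
    · simpa using hv j
  · rw [Fin.sum_univ_add]
    simp

lemma sos_smul {n d : ℕ} {f : MvPolynomial (Fin n) ℝ} {t : ℝ}
    (ht : 0 ≤ t) (hf : IsSOSForm n d f) : IsSOSForm n d (t • f) := by
  obtain ⟨N, u, hu, rfl⟩ := hf
  refine ⟨N, fun i => Real.sqrt t • u i, ?_, ?_⟩
  · intro i
    show (Real.sqrt t • u i).IsHomogeneous d
    rw [smul_eq_C_mul]
    exact (hu i).C_mul _
  · rw [Finset.smul_sum]
    refine Finset.sum_congr rfl fun i _ => ?_
    rw [smul_pow, Real.sq_sqrt ht]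

lemma sos_mul {n d e : ℕ} {f g : MvPolynomial (Fin n) ℝ}
    (hf : IsSOSForm n d f) (hg : IsSOSForm n e g) : IsSOSForm n (d + e) (f * g) := by
  obtain ⟨N, u, hu, rfl⟩ := hf
  obtain ⟨M, v, hv, rfl⟩ := hg
  refine ⟨N * M, fun k => u (finProdFinEquiv.symm k).1 * v (finProdFinEquiv.symm k).2, ?_, ?_⟩
  · intro k
    exact (hu _).mul (hv _)
  · rw [Finset.sum_mul_sum]
    rw [← Equiv.sum_comp finProdFinEquiv
      (fun k => (u (finProdFinEquiv.symm k).1 * v (finProdFinEquiv.symm k).2) ^ 2)]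
    simp [mul_pow, ← Finset.sum_product', Finset.sum_product]

lemma sos_sq {n d : ℕ} {p : MvPolynomial (Fin n) ℝ} {c : ℝ}
    (hp : p.IsHomogeneous d) (hc : 0 ≤ c) : IsSOSForm n d (c • p ^ 2) := by
  refine ⟨1, fun _ => Real.sqrt c • p, fun i => ?_, ?_⟩
  · rw [smul_eq_C_mul]; exact hp.C_mul _
  · rw [Fin.sum_univ_one, smul_pow, Real.sq_sqrt hc]

theorem span_mul_Uset_subset (n d e : ℕ) (f g : MvPolynomial (Fin n) ℝ)
    (hf : f.IsHomogeneous (2 * d)) (hg : g.IsHomogeneous (2 * e))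
    (hfs : IsSOSForm n d f) (hgs : IsSOSForm n e g) :
    (Submodule.span ℝ {w : MvPolynomial (Fin n) ℝ |
        ∃ u ∈ Uset n d f, ∃ v ∈ Uset n e g, w = u * v} : Set (MvPolynomial (Fin n) ℝ))
      ⊆ Uset n (d + e) (f * g) := by
  have hfg : IsSOSForm n (d + e) (f * g) := sos_mul hfs hgs
  set S : Submodule ℝ (MvPolynomial (Fin n) ℝ) :=
    { carrier := Uset n (d + e) (f * g)
      zero_mem' := by
        refine ⟨isHomogeneous_zero _ _ _, 1, one_pos, ?_⟩
        simpa using hfg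
      add_mem' := by
        rintro p q ⟨hph, c, hc, hcs⟩ ⟨hqh, c', hc', hc's⟩
        refine ⟨hph.add hqh, min c c' / 4, by positivity, ?_⟩
        set a := min c c' with ha
        have hpq : (p + q) ^ 2 = p ^ 2 + (2 : ℝ) • (p * q) + q ^ 2 := by
          rw [two_smul]; ring
        have hmq : (p - q) ^ 2 = p ^ 2 - (2 : ℝ) • (p * q) + q ^ 2 := by
          rw [two_smul]; ring
        have h1 : f * g - (a / 4) • (p + q) ^ 2 =
            (1 / 2 : ℝ) • (f * g - c • p ^ 2) + (1 / 2 : ℝ) • (f * g - c' • q ^ 2)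
            + (a / 4) • (p - q) ^ 2 + ((c - a) / 2) • p ^ 2 + ((c' - a) / 2) • q ^ 2 := by
          rw [hpq, hmq]; module
        rw [h1]
        have hac : a ≤ c := min_le_left _ _
        have hac' : a ≤ c' := min_le_right _ _
        exact sos_add (sos_add (sos_add (sos_add (sos_smul (by norm_num) hcs)
          (sos_smul (by norm_num) hc's)) (sos_sq (hph.sub hqh) (by positivity)))
          (sos_sq hph (by linarith))) (sos_sq hqh (by linarith))
      smul_mem' := by
        rintro t p ⟨hph, c, hc, hcs⟩
        rcases eq_or_ne t 0 with rfl | ht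
        · refine ⟨by simpa using isHomogeneous_zero (Fin n) ℝ (d + e), 1, one_pos, ?_⟩
          simpa using hfg
        · refine ⟨by rw [smul_eq_C_mul]; exact hph.C_mul _, c / t ^ 2,
            by positivity, ?_⟩
          have h1 : f * g - (c / t ^ 2) • (t • p) ^ 2 = f * g - c • p ^ 2 := by
            rw [smul_pow, smul_smul, div_mul_cancel₀ _ (by positivity)]
          rw [h1]; exact hcs }
  have : Submodule.span ℝ {w : MvPolynomial (Fin n) ℝ |
      ∃ u ∈ Uset n d f, ∃ v ∈ Uset n e g, w = u * v} ≤ S := by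
    rw [Submodule.span_le]
    rintro w ⟨u, ⟨huh, c, hc, hcs⟩, v, ⟨hvh, c', hc', hc's⟩, rfl⟩
    refine ⟨huh.mul hvh, c * c', by positivity, ?_⟩
    have h1 : f * g - (c * c') • (u * v) ^ 2 =
        f * (g - c' • v ^ 2) + (f - c • u ^ 2) * (c' • v ^ 2) := by
      simp only [smul_eq_C_mul, map_mul]
      ring
    rw [h1]
    exact sos_add (sos_mul hfs hc's) (sos_mul hcs (sos_sq hvh hc'.le))
  exact this
end

section
/- If g^r is strictly sos of degree 2re and p is a degree-d form with (f - c·p^2)·g^r sos for some c > 0 and f·g^r sos, then p·q ∈ U_{f g^r} for every form q of degree re; in particular p·R[x]_{re} ⊆ U_{f g^r}. -/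
open MvPolynomial Finsupp

theorem mul_mem_Uset_of_strict (n d e r : ℕ) (f g p : MvPolynomial (Fin n) ℝ)
    (hf : f.IsHomogeneous (2 * d)) (hg : g.IsHomogeneous (2 * e))
    (hp : p.IsHomogeneous d)
    (hgstrict : ∀ u : MvPolynomial (Fin n) ℝ, u.IsHomogeneous (e * r) →
      u ∈ Uset n (e * r) (g ^ r))
    (c : ℝ) (hc : 0 < c)
    (hsos1 : IsSOSForm n (d + e * r) ((f - c • p ^ 2) * g ^ r))
    (hsos2 : IsSOSForm n (d + e * r) (f * g ^ r)) :
    ∀ q : MvPolynomial (Fin n) ℝ, q.IsHomogeneous (e * r) →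
      p * q ∈ Uset n (d + e * r) (f * g ^ r) := by
  intro q hq
  obtain ⟨-, c', hc', N, h, hhom, hsum⟩ := hgstrict q hq
  refine ⟨hp.mul hq, c * c', mul_pos hc hc', ?_⟩
  -- f*g^r - (c*c')•(p*q)^2 = (f - c•p^2)*g^r + c•(p^2 * (g^r - c'•q^2))
  have key : f * g ^ r - (c * c') • (p * q) ^ 2
      = (f - c • p ^ 2) * g ^ r + c • (p ^ 2 * (g ^ r - c' • q ^ 2)) := by
    simp only [smul_eq_C_mul, map_mul]
    ring
  rw [key]
  obtain ⟨N1, h1, hhom1, hsum1⟩ := hsos1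
  -- second summand as sos: c • (p^2 * Σ h_i^2) = Σ (√c • (p * h_i))^2
  refine ⟨N1 + N, Fin.append h1 (fun i => (Real.sqrt c) • (p * h i)), ?_, ?_⟩
  · intro i
    refine Fin.addCases (fun j => ?_) (fun j => ?_) i
    · simpa using hhom1 j
    · simp only [Fin.append_right]
      exact (mem_homogeneousSubmodule _ _).1
        ((homogeneousSubmodule (Fin n) ℝ (d + e * r)).smul_mem _
          ((mem_homogeneousSubmodule _ _).2 (hp.mul (hhom j))))
  · rw [Fin.sum_univ_add]
    simp only [Fin.append_left, Fin.append_right]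
    rw [hsum1]
    congr 1
    rw [hsum]
    have : ∀ j, ((Real.sqrt c) • (p * h j)) ^ 2 = c • (p ^ 2 * (h j) ^ 2) := by
      intro j
      rw [smul_pow, Real.sq_sqrt hc.le, mul_pow]
    simp_rw [this]
    rw [← Finset.smul_sum, ← Finset.mul_sum]
end
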